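/- Let ρ₁, ρ₂ ∈ U_∞. Suppose that (i) for every s ∈ ℝ, lim_{T→+∞} ( |∫_{-T-s}^{-T} ρ₂(t) dt| + |∫_{T}^{T-s} ρ₂(t) dt| ) / ∫_{-T}^{T} ρ₁(t) dt = 0, and (ii) there exists a function g : ℝ → (0,∞) such that ρ₂(t−s) ≤ g(s) ρ₂(t) for all t, s ∈ ℝ. Then the space PAP_0(ℝ, X, ρ₁, ρ₂) is translation invariant: for every f ∈ PAP_0(ℝ, X, ρ₁, ρ₂) and every s ∈ ℝ, the function t ↦ f(t−s) belongs to PAP_0(ℝ, X, ρ₁, ρ₂). -/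

import Mathlib

open MeasureTheory Filter Set

/-- A weight of class `U_∞`: locally integrable, a.e. positive, and
`∫_{-T}^{T} ρ(t) dt → ∞` as `T → +∞`. -/
def IsWeightUInfty (ρ : ℝ → ℝ) : Prop :=
  (∀ a b : ℝ, IntervalIntegrable ρ MeasureTheory.volume a b) ∧
  (∀ᵐ t : ℝ ∂MeasureTheory.volume, 0 < ρ t) ∧
  Filter.Tendsto (fun T : ℝ => ∫ t in (-T)..T, ρ t) Filter.atTop Filter.atTop

/-- Membership in `PAP_0(ℝ, X, ρ₁, ρ₂)`: bounded continuous functions `f` with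
`lim_{T→+∞} (1/(2∫_{-T}^{T} ρ₁)) ∫_{-T}^{T} ‖f(t)‖ ρ₂(t) dt = 0`. -/
def MemPAP0 {X : Type*} [NormedAddCommGroup X] (ρ₁ ρ₂ : ℝ → ℝ) (f : ℝ → X) : Prop :=
  Continuous f ∧ (∃ C : ℝ, ∀ t : ℝ, ‖f t‖ ≤ C) ∧
  Filter.Tendsto (fun T : ℝ =>
      (1 / (2 * ∫ t in (-T)..T, ρ₁ t)) * ∫ t in (-T)..T, ‖f t‖ * ρ₂ t)
    Filter.atTop (nhds 0)

/-- Under conditions (i) and (ii) on the weights `ρ₁, ρ₂ ∈ U_∞`, the space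
`PAP_0(ℝ, X, ρ₁, ρ₂)` is translation invariant. -/
theorem PAP0_translation_invariant
    {X : Type*} [NormedAddCommGroup X] [NormedSpace ℂ X] [CompleteSpace X]
    (ρ₁ ρ₂ : ℝ → ℝ) (hρ₁ : IsWeightUInfty ρ₁) (hρ₂ : IsWeightUInfty ρ₂)
    (hi : ∀ s : ℝ, Filter.Tendsto (fun T : ℝ =>
        (|∫ t in (-T - s)..(-T), ρ₂ t| + |∫ t in T..(T - s), ρ₂ t|) /
          ∫ t in (-T)..T, ρ₁ t) Filter.atTop (nhds 0))
    (hii : ∃ g : ℝ → ℝ, (∀ s : ℝ, 0 < g s) ∧ ∀ t s : ℝ, ρ₂ (t - s) ≤ g s * ρ₂ t) :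
    ∀ f : ℝ → X, MemPAP0 ρ₁ ρ₂ f → ∀ s : ℝ, MemPAP0 ρ₁ ρ₂ (fun t : ℝ => f (t - s)) := by
  obtain ⟨g, hgpos, hg⟩ := hii
  intro f hf s
  obtain ⟨hfc, ⟨C, hC⟩, hf3⟩ := hf
  have hC0 : 0 ≤ C := le_trans (norm_nonneg (f 0)) (hC 0)
  have hfcs : Continuous fun t : ℝ => f (t - s) := hfc.comp (continuous_sub_right s)
  refine ⟨hfcs, ⟨C, fun t => hC _⟩, ?_⟩
  -- basic integrability facts
  have hInt : ∀ a b : ℝ, IntervalIntegrable (fun t => ‖f t‖ * ρ₂ t) volume a b :=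
    fun a b => (hρ₂.1 a b).continuousOn_mul hfc.norm.continuousOn
  have hρ₂s : ∀ a b : ℝ, IntervalIntegrable (fun u => ρ₂ (u + s)) volume a b := by
    intro a b
    have := (hρ₂.1 (a + s) (b + s)).comp_add_right s
    simpa using this
  have hInt2 : ∀ a b : ℝ, IntervalIntegrable (fun u => ‖f u‖ * ρ₂ (u + s)) volume a b :=
    fun a b => (hρ₂s a b).continuousOn_mul hfc.norm.continuousOn
  -- a.e. positivity
  have hae : ∀ᵐ t : ℝ, 0 < ρ₂ t := hρ₂.2.1
  -- edge bound
  have hedge : ∀ a b : ℝ, (∫ t in a..b, ‖f t‖ * ρ₂ t) ≤ C * |∫ t in a..b, ρ₂ t| := by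
    intro a b
    rcases le_total a b with hab | hab
    · calc (∫ t in a..b, ‖f t‖ * ρ₂ t) ≤ ∫ t in a..b, C * ρ₂ t := by
            refine intervalIntegral.integral_mono_ae hab (hInt a b)
              ((hρ₂.1 a b).const_mul C) ?_
            filter_upwards [hae] with t ht
            exact mul_le_mul_of_nonneg_right (hC t) ht.le
        _ = C * ∫ t in a..b, ρ₂ t := intervalIntegral.integral_const_mul _ _
        _ ≤ C * |∫ t in a..b, ρ₂ t| := by
            exact mul_le_mul_of_nonneg_left (le_abs_self _) hC0
    · have h1 : 0 ≤ ∫ t in b..a, ‖f t‖ * ρ₂ t := by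
        refine intervalIntegral.integral_nonneg_of_ae hab ?_
        filter_upwards [hae] with t ht
        exact mul_nonneg (norm_nonneg _) ht.le
      rw [intervalIntegral.integral_symm b a]
      have : 0 ≤ C * |∫ t in a..b, ρ₂ t| := mul_nonneg hC0 (abs_nonneg _)
      linarith
  -- the dominating function
  set A : ℝ → ℝ := fun T => ∫ t in (-T)..T, ρ₁ t with hA
  have hApos : ∀ᶠ T in atTop, 0 < A T := hρ₁.2.2.eventually_gt_atTop 0
  have hGlim : Tendsto (fun T : ℝ => g (-s) *
      ((1 / (2 * A T)) * (∫ t in (-T)..T, ‖f t‖ * ρ₂ t) +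
        (C / 2) * ((|∫ t in (-T - s)..(-T), ρ₂ t| + |∫ t in T..(T - s), ρ₂ t|) / A T)))
      atTop (nhds 0) := by
    have := (hf3.add ((hi s).const_mul (C / 2))).const_mul (g (-s))
    simpa using this
  refine squeeze_zero' ?_ ?_ hGlim
  · filter_upwards [eventually_ge_atTop (0 : ℝ), hApos] with T hT hAT
    have h1 : 0 ≤ ∫ t in (-T)..T, ‖f (t - s)‖ * ρ₂ t := by
      refine intervalIntegral.integral_nonneg_of_ae (by linarith) ?_
      filter_upwards [hae] with t ht
      exact mul_nonneg (norm_nonneg _) ht.le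
    positivity
  · filter_upwards [eventually_ge_atTop (0 : ℝ), hApos] with T hT hAT
    have hTT : -T - s ≤ T - s := by linarith
    -- change of variables
    have hcv : (∫ t in (-T)..T, ‖f (t - s)‖ * ρ₂ t)
        = ∫ u in (-T - s)..(T - s), ‖f u‖ * ρ₂ (u + s) := by
      have h1 : (∫ t in (-T)..T, ‖f (t - s)‖ * ρ₂ t)
          = ∫ t in (-T)..T, (fun u => ‖f u‖ * ρ₂ (u + s)) (t - s) := by
        refine intervalIntegral.integral_congr fun t _ => ?_
        simp
      rw [h1]
      exact intervalIntegral.integral_comp_sub_right (fun u => ‖f u‖ * ρ₂ (u + s)) s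
    -- pointwise comparison
    have hmono : (∫ u in (-T - s)..(T - s), ‖f u‖ * ρ₂ (u + s))
        ≤ ∫ u in (-T - s)..(T - s), g (-s) * (‖f u‖ * ρ₂ u) := by
      refine intervalIntegral.integral_mono hTT (hInt2 _ _) ((hInt _ _).const_mul _) ?_
      intro u
      have h2 : ρ₂ (u + s) ≤ g (-s) * ρ₂ u := by
        have := hg u (-s); simpa [sub_neg_eq_add] using this
      calc ‖f u‖ * ρ₂ (u + s) ≤ ‖f u‖ * (g (-s) * ρ₂ u) :=
            mul_le_mul_of_nonneg_left h2 (norm_nonneg _)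
        _ = g (-s) * (‖f u‖ * ρ₂ u) := by ring
    -- split the interval
    have hsplit : (∫ u in (-T - s)..(T - s), ‖f u‖ * ρ₂ u)
        = (∫ u in (-T - s)..(-T), ‖f u‖ * ρ₂ u) + ((∫ u in (-T)..T, ‖f u‖ * ρ₂ u)
          + ∫ u in T..(T - s), ‖f u‖ * ρ₂ u) := by
      rw [intervalIntegral.integral_add_adjacent_intervals (hInt (-T) T) (hInt T (T - s)),
        intervalIntegral.integral_add_adjacent_intervals (hInt (-T - s) (-T)) (hInt (-T) (T - s))]
    -- combine
    have hkey : (∫ t in (-T)..T, ‖f (t - s)‖ * ρ₂ t)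
        ≤ g (-s) * (C * |∫ t in (-T - s)..(-T), ρ₂ t| + ((∫ u in (-T)..T, ‖f u‖ * ρ₂ u)
          + C * |∫ t in T..(T - s), ρ₂ t|)) := by
      rw [hcv]
      refine hmono.trans ?_
      rw [intervalIntegral.integral_const_mul]
      refine mul_le_mul_of_nonneg_left ?_ (hgpos (-s)).le
      rw [hsplit]
      exact add_le_add (hedge _ _) (add_le_add le_rfl (hedge _ _))
    have hinv : 0 < 1 / (2 * A T) := by positivity
    calc (1 / (2 * A T)) * ∫ t in (-T)..T, ‖f (t - s)‖ * ρ₂ t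
        ≤ (1 / (2 * A T)) * (g (-s) * (C * |∫ t in (-T - s)..(-T), ρ₂ t|
          + ((∫ u in (-T)..T, ‖f u‖ * ρ₂ u) + C * |∫ t in T..(T - s), ρ₂ t|))) :=
          mul_le_mul_of_nonneg_left hkey hinv.le
      _ = g (-s) * ((1 / (2 * A T)) * (∫ t in (-T)..T, ‖f t‖ * ρ₂ t) +
          (C / 2) * ((|∫ t in (-T - s)..(-T), ρ₂ t| + |∫ t in T..(T - s), ρ₂ t|) / A T)) := by
          field_simp
          ring_nf
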